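/- Let N ≥ 1, let W̄, V̄ ∈ ℂ^{N×N} be Hermitian, ĝ ∈ ℂ^N, E ∈ ℝ, and let η > 0 and ε > 0. Then the robust harvested-power constraint 'for every Δg ∈ ℂ^N with Δgᴴ Δg ≤ ε², writing g = ĝ + Δg, one has −η · gᴴ (W̄ + V̄) g ≤ E' holds if and only if there exists φ ≥ 0 such that the (N+1)×(N+1) Hermitian matrix [[φ I_N + V̄, V̄ ĝ],[ĝᴴ V̄, −φ ε² + E/η + ĝᴴ V̄ ĝ]] + U_ĝᴴ W̄ U_ĝ is positive semidefinite, where U_ĝ = [I_N ĝ] ∈ ℂ^{N×(N+1)}. -/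

import Mathlib

open Matrix
open scoped ComplexOrder

/-- `U_ĝ = [I_N  ĝ]`, the `N×(N+1)` matrix whose first `N` columns form `I_N` and whose last
column is `ĝ`. -/
noncomputable def Ug {N : ℕ} (ghat : Fin N → ℂ) : Matrix (Fin N) (Fin N ⊕ Unit) ℂ :=
  Matrix.fromCols (1 : Matrix (Fin N) (Fin N) ℂ) (Matrix.replicateCol Unit ghat)

/-- The LMI matrix `[[φ I_N + V̄, V̄ ĝ],[ĝᴴ V̄, −φ ε² + E/η + ĝᴴ V̄ ĝ]] + U_ĝᴴ W̄ U_ĝ`. -/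
noncomputable def SC10 {N : ℕ} (W V : Matrix (Fin N) (Fin N) ℂ) (ghat : Fin N → ℂ)
    (E φ ε η : ℝ) : Matrix (Fin N ⊕ Unit) (Fin N ⊕ Unit) ℂ :=
  Matrix.fromBlocks
    ((φ : ℂ) • (1 : Matrix (Fin N) (Fin N) ℂ) + V)
    (Matrix.replicateCol Unit (V *ᵥ ghat))
    (Matrix.replicateRow Unit (star ghat ᵥ* V))
    (Matrix.of fun _ _ => (-(φ * ε ^ 2) + E / η : ℂ) + star ghat ⬝ᵥ V *ᵥ ghat)
  + (Ug ghat)ᴴ * W * Ug ghat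

namespace SAux
variable {m : Type*} [Fintype m]

noncomputable def qf (M : Matrix m m ℂ) (x : m → ℂ) : ℂ := star x ⬝ᵥ M *ᵥ x

lemma herm_cross (M : Matrix m m ℂ) (hM : M.IsHermitian) (x y : m → ℂ) :
    star y ⬝ᵥ M *ᵥ x = starRingEnd ℂ (star x ⬝ᵥ M *ᵥ y) := by
  have h : star (star x ⬝ᵥ M *ᵥ y) = star (M *ᵥ y) ⬝ᵥ star (star x) := by
    rw [star_dotProduct_star]
  rw [starRingEnd_apply, h, star_star, star_mulVec, hM.eq, dotProduct_mulVec]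

lemma qf_im_zero (M : Matrix m m ℂ) (hM : M.IsHermitian) (x : m → ℂ) :
    (qf M x).im = 0 := by
  have := herm_cross M hM x x
  rw [← Complex.conj_eq_iff_im]
  exact (this.symm : _)

lemma qf_smul (M : Matrix m m ℂ) (c : ℂ) (x : m → ℂ) :
    qf M (c • x) = (starRingEnd ℂ c) * c * qf M x := by
  simp only [qf, mulVec_smul, star_smul, smul_dotProduct, dotProduct_smul, smul_eq_mul,
    starRingEnd_apply, Pi.star_def]
  ring

lemma qf_expand (M : Matrix m m ℂ) (hM : M.IsHermitian) (α β : ℝ) (x y : m → ℂ) :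
    (qf M ((α:ℂ) • x + (β:ℂ) • y)).re =
      α^2 * (qf M x).re + β^2 * (qf M y).re + 2*α*β*(star x ⬝ᵥ M *ᵥ y).re := by
  have hc := herm_cross M hM x y
  have : qf M ((α:ℂ) • x + (β:ℂ) • y)
      = (α:ℂ)^2 * qf M x + (β:ℂ)^2 * qf M y
        + (α:ℂ)*(β:ℂ)*(star x ⬝ᵥ M *ᵥ y + star y ⬝ᵥ M *ᵥ x) := by
    simp only [qf, star_add, star_smul, mulVec_add, mulVec_smul, add_dotProduct,
      dotProduct_add, smul_dotProduct, dotProduct_smul, star_trivial, Complex.star_def,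
      Complex.conj_ofReal, smul_eq_mul]
    ring
  rw [this, hc]
  simp [Complex.add_re, Complex.mul_re, ← Complex.ofReal_pow, Complex.ofReal_re,
    Complex.ofReal_im, Complex.conj_re, Complex.conj_im]
  ring

/-- IVT helper for the path polynomial. -/
lemma ivt_aux (S1 S2 cS T : ℝ) (h0 : S1 ≤ T) (h1 : T ≤ S2) :
    ∃ u ∈ Set.Icc (0:ℝ) 1,
      (1-u)^2*S1 + u^2*S2 + 2*(1-u)*u*cS - ((1-u)^2+u^2)*T = 0 := by
  set f : ℝ → ℝ := fun u => (1-u)^2*S1 + u^2*S2 + 2*(1-u)*u*cS - ((1-u)^2+u^2)*T with hf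
  have hfc : Continuous f := by fun_prop
  have hmem : (0:ℝ) ∈ Set.Icc (f 0) (f 1) := by
    constructor
    · show f 0 ≤ 0; simp [hf]; linarith
    · show (0:ℝ) ≤ f 1; simp [hf]; linarith
  obtain ⟨u, hu, hu0⟩ := intermediate_value_Icc zero_le_one hfc.continuousOn hmem
  exact ⟨u, hu, hu0⟩

/-- Real-arithmetic endgame: recover the convex combination from the rotated system. -/
lemma solve_aux (F1 G1 F2 G2 cP cQ u n₀ FP GQ a b : ℝ)
    (hn₀ : n₀ = (1-u)^2 + u^2) (hab : a + b = 1)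
    (hA : n₀ * FP = (1-u)^2*F1 + u^2*F2 + 2*(1-u)*u*cP)
    (hB : n₀ * GQ = (1-u)^2*G1 + u^2*G2 + 2*(1-u)*u*cQ)
    (key : (G2-G1) * cP - (F2-F1) * cQ = 0)
    (hC : (1-u)^2*((F2-F1)*F1+(G2-G1)*G1) + u^2*((F2-F1)*F2+(G2-G1)*G2)
        + 2*(1-u)*u*((F2-F1)*cP+(G2-G1)*cQ)
        - ((1-u)^2+u^2)*(((F2-F1)*F1+(G2-G1)*G1) + b*((F2-F1)^2+(G2-G1)^2)) = 0)
    (hδ : 0 < (F2-F1)^2 + (G2-G1)^2) :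
    FP = a*F1 + b*F2 ∧ GQ = a*G1 + b*G2 := by
  subst hn₀
  have hn₀pos : 0 < (1-u)^2 + u^2 := by nlinarith [sq_nonneg (u - 1/2)]
  have e1 : (G2-G1) * FP - (F2-F1) * GQ = (G2-G1)*F1 - (F2-F1)*G1 := by
    refine mul_left_cancel₀ hn₀pos.ne' ?_
    linear_combination (G2-G1) * hA - (F2-F1) * hB + (2*(1-u)*u) * key
  have e2 : (F2-F1) * FP + (G2-G1) * GQ
      = (F2-F1)*F1 + (G2-G1)*G1 + b*((F2-F1)^2+(G2-G1)^2) := by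
    refine mul_left_cancel₀ hn₀pos.ne' ?_
    linear_combination (F2-F1) * hA + (G2-G1) * hB + hC
  constructor
  · refine mul_left_cancel₀ hδ.ne' ?_
    linear_combination (G2-G1) * e1 + (F2-F1) * e2
      + (-( (F2-F1)^2 + (G2-G1)^2 ) * F1) * hab
  · refine mul_left_cancel₀ hδ.ne' ?_
    linear_combination (-(F2-F1)) * e1 + (G2-G1) * e2
      + (-( (F2-F1)^2 + (G2-G1)^2 ) * G1) * hab

lemma convex_joint (P Q : Matrix m m ℂ) (hP : P.IsHermitian) (hQ : Q.IsHermitian) :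
    Convex ℝ {p : ℝ × ℝ | ∃ x : m → ℂ, p = ((qf P x).re, (qf Q x).re)} := by
  rintro p ⟨x₁, rfl⟩ q ⟨x₂, rfl⟩ a b ha hb hab
  by_cases hd : (qf P x₂).re - (qf P x₁).re = 0 ∧ (qf Q x₂).re - (qf Q x₁).re = 0
  · refine ⟨x₁, ?_⟩
    obtain ⟨h1, h2⟩ := hd
    simp only [Prod.smul_mk, Prod.mk_add_mk, smul_eq_mul, Prod.mk.injEq]
    constructor
    · linear_combination (qf P x₁).re * hab + b * h1
    · linear_combination (qf Q x₁).re * hab + b * h2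
  · -- notation
    have hδ : 0 < ((qf P x₂).re - (qf P x₁).re)^2 + ((qf Q x₂).re - (qf Q x₁).re)^2 := by
      rcases not_and_or.mp hd with h | h <;> positivity
    set d1 : ℝ := (qf P x₂).re - (qf P x₁).re with hd1
    set d2 : ℝ := (qf Q x₂).re - (qf Q x₁).re with hd2
    -- phase rotation
    set c : ℂ := (d2:ℂ) * (star x₁ ⬝ᵥ P *ᵥ x₂) - (d1:ℂ) * (star x₁ ⬝ᵥ Q *ᵥ x₂) with hc
    obtain ⟨ω, hω1, hωc⟩ : ∃ ω : ℂ, (starRingEnd ℂ ω) * ω = 1 ∧ (ω * c).re = 0 := by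
      by_cases h : c = 0
      · exact ⟨1, by simp, by simp [h]⟩
      · refine ⟨Complex.I * (starRingEnd ℂ c) * ((‖c‖ : ℝ):ℂ)⁻¹, ?_, ?_⟩
        · have h2 : Complex.normSq (Complex.I * (starRingEnd ℂ c) * ((‖c‖ : ℝ):ℂ)⁻¹)
              = 1 := by
            have habs : ‖c‖ ≠ 0 := norm_ne_zero_iff.mpr h
            simp [Complex.normSq_eq_norm_sq, _root_.map_mul]
            field_simp
          rw [← Complex.normSq_eq_conj_mul_self, h2, Complex.ofReal_one]
        · have h3 : Complex.I * (starRingEnd ℂ c) * ((‖c‖ : ℝ):ℂ)⁻¹ * c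
              = Complex.I * (((Complex.normSq c : ℝ):ℂ) * ((‖c‖ : ℝ):ℂ)⁻¹) := by
            rw [Complex.normSq_eq_conj_mul_self]; ring
          rw [h3]
          simp [Complex.mul_re]
    set y₂ := ω • x₂ with hy₂
    have hqy : ∀ T : Matrix m m ℂ, qf T y₂ = qf T x₂ := fun T => by
      rw [hy₂, qf_smul, hω1, one_mul]
    have hcross : ∀ T : Matrix m m ℂ, star x₁ ⬝ᵥ T *ᵥ y₂ = ω * (star x₁ ⬝ᵥ T *ᵥ x₂) :=
      fun T => by rw [hy₂, mulVec_smul, dotProduct_smul, smul_eq_mul]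
    set cP : ℝ := (star x₁ ⬝ᵥ P *ᵥ y₂).re with hcP
    set cQ : ℝ := (star x₁ ⬝ᵥ Q *ᵥ y₂).re with hcQ
    have key : d2 * cP - d1 * cQ = 0 := by
      have h4 : ω * c = (d2:ℂ) * (star x₁ ⬝ᵥ P *ᵥ y₂) - (d1:ℂ) * (star x₁ ⬝ᵥ Q *ᵥ y₂) := by
        rw [hcross P, hcross Q, hc]; ring
      have h5 := congrArg Complex.re h4
      rw [hωc] at h5
      rw [hcP, hcQ]
      simpa [Complex.sub_re, Complex.re_ofReal_mul] using h5.symm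
    -- IVT
    have h0' : d1 * (qf P x₁).re + d2 * (qf Q x₁).re
        ≤ d1 * (qf P x₁).re + d2 * (qf Q x₁).re + b * (d1^2 + d2^2) := by
      nlinarith [mul_nonneg hb hδ.le]
    have h1' : d1 * (qf P x₁).re + d2 * (qf Q x₁).re + b * (d1^2 + d2^2)
        ≤ d1 * (qf P x₂).re + d2 * (qf Q x₂).re := by
      have e : d1 * (qf P x₂).re + d2 * (qf Q x₂).re
          - (d1 * (qf P x₁).re + d2 * (qf Q x₁).re) = d1^2 + d2^2 := by
        rw [hd1, hd2]; ring
      have hbδ : b * (d1^2 + d2^2) ≤ d1^2 + d2^2 :=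
        mul_le_of_le_one_left hδ.le (by linarith)
      linarith
    obtain ⟨u, hu01, hgu⟩ := ivt_aux (d1 * (qf P x₁).re + d2 * (qf Q x₁).re)
      (d1 * (qf P x₂).re + d2 * (qf Q x₂).re) (d1 * cP + d2 * cQ)
      (d1 * (qf P x₁).re + d2 * (qf Q x₁).re + b * (d1^2 + d2^2)) h0' h1'
    -- scaled point
    set n₀ : ℝ := (1-u)^2 + u^2 with hn₀
    have hn₀pos : 0 < n₀ := by rw [hn₀]; nlinarith [sq_nonneg (u - 1/2)]
    set zin := (((1-u):ℝ):ℂ) • x₁ + ((u:ℝ):ℂ) • y₂ with hzin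
    set z := (((Real.sqrt n₀)⁻¹ : ℝ):ℂ) • zin with hz
    have hscale : ∀ T : Matrix m m ℂ, (qf T z).re = n₀⁻¹ * (qf T zin).re := by
      intro T
      rw [hz, qf_smul]
      have h6 : (starRingEnd ℂ) (((Real.sqrt n₀)⁻¹ : ℝ):ℂ) * (((Real.sqrt n₀)⁻¹ : ℝ):ℂ)
          = ((n₀⁻¹ : ℝ) : ℂ) := by
        rw [Complex.conj_ofReal, ← Complex.ofReal_mul, ← mul_inv, Real.mul_self_sqrt hn₀pos.le]
      rw [h6, Complex.re_ofReal_mul]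
    have hzP : (qf P zin).re
        = (1-u)^2 * (qf P x₁).re + u^2 * (qf P x₂).re + 2*(1-u)*u*(star x₁ ⬝ᵥ P *ᵥ y₂).re := by
      rw [hzin, qf_expand P hP (1-u) u x₁ y₂, hqy P]
    have hzQ : (qf Q zin).re
        = (1-u)^2 * (qf Q x₁).re + u^2 * (qf Q x₂).re + 2*(1-u)*u*(star x₁ ⬝ᵥ Q *ᵥ y₂).re := by
      rw [hzin, qf_expand Q hQ (1-u) u x₁ y₂, hqy Q]
    have hA : n₀ * (qf P z).re
        = (1-u)^2 * (qf P x₁).re + u^2 * (qf P x₂).re + 2*(1-u)*u*cP := by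
      rw [hscale P, hzP, ← mul_assoc, mul_inv_cancel₀ hn₀pos.ne', one_mul, ← hcP]
    have hB : n₀ * (qf Q z).re
        = (1-u)^2 * (qf Q x₁).re + u^2 * (qf Q x₂).re + 2*(1-u)*u*cQ := by
      rw [hscale Q, hzQ, ← mul_assoc, mul_inv_cancel₀ hn₀pos.ne', one_mul, ← hcQ]
    rw [hd1, hd2] at key hgu
    rw [hn₀] at hgu
    obtain ⟨hFz, hGz⟩ := solve_aux (qf P x₁).re (qf Q x₁).re (qf P x₂).re (qf Q x₂).re
      cP cQ u n₀ (qf P z).re (qf Q z).re a b hn₀ hab hA hB key hgu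
      (by rw [hd1, hd2] at hδ; exact hδ)
    refine ⟨z, ?_⟩
    simp only [Prod.smul_mk, Prod.mk_add_mk, smul_eq_mul, Prod.mk.injEq]
    exact ⟨hFz.symm, hGz.symm⟩
lemma qf_real_smul (M : Matrix m m ℂ) (r : ℝ) (x : m → ℂ) :
    (qf M ((r:ℂ) • x)).re = r^2 * (qf M x).re := by
  rw [qf_smul, Complex.conj_ofReal, ← Complex.ofReal_mul, Complex.re_ofReal_mul, ← sq]

lemma qf_zero (M : Matrix m m ℂ) : qf M (0 : m → ℂ) = 0 := by
  simp [qf]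

theorem s_lemma (P Q : Matrix m m ℂ) (hP : P.IsHermitian) (hQ : Q.IsHermitian)
    (x₀ : m → ℂ) (hslater : 0 < (qf Q x₀).re)
    (h : ∀ x, 0 ≤ (qf Q x).re → 0 ≤ (qf P x).re) :
    ∃ φ : ℝ, 0 ≤ φ ∧ ∀ x, 0 ≤ (qf P x).re - φ * (qf Q x).re := by
  classical
  set Wset : Set (ℝ × ℝ) := {p : ℝ × ℝ | ∃ x : m → ℂ, p = ((qf P x).re, (qf Q x).re)}
    with hWset
  set U : Set (ℝ × ℝ) := {p : ℝ × ℝ | p.1 < 0 ∧ 0 < p.2} with hU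
  have hUconv : Convex ℝ U := by
    have h1 : Convex ℝ {p : ℝ × ℝ | p.1 < 0} :=
      convex_halfSpace_lt (⟨fun _ _ => rfl, fun _ _ => rfl⟩ : IsLinearMap ℝ (Prod.fst : ℝ × ℝ → ℝ)) 0
    have h2 : Convex ℝ {p : ℝ × ℝ | 0 < p.2} :=
      convex_halfSpace_gt (⟨fun _ _ => rfl, fun _ _ => rfl⟩ : IsLinearMap ℝ (Prod.snd : ℝ × ℝ → ℝ)) 0
    exact h1.inter h2
  have hUopen : IsOpen U :=
    (isOpen_lt continuous_fst continuous_const).inter (isOpen_lt continuous_const continuous_snd)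
  have hdisj : Disjoint U Wset := by
    rw [Set.disjoint_left]
    rintro p ⟨hp1, hp2⟩ ⟨x, rfl⟩
    exact absurd (h x hp2.le) (not_le.mpr hp1)
  obtain ⟨f, u, hfU, hfW⟩ :=
    geometric_hahn_banach_open hUconv hUopen (convex_joint P Q hP hQ) hdisj
  set a : ℝ := f (1, 0) with haf
  set b : ℝ := f (0, 1) with hbf
  have hf : ∀ p : ℝ × ℝ, f p = a * p.1 + b * p.2 := by
    intro p
    have hp : p = p.1 • ((1, 0) : ℝ × ℝ) + p.2 • ((0, 1) : ℝ × ℝ) := by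
      ext <;> simp
    rw [hp, map_add, f.map_smul, f.map_smul, haf, hbf]
    simp [smul_eq_mul]
    ring
  have hu0 : u ≤ 0 := by
    have h0 : ((0 : ℝ), (0 : ℝ)) ∈ Wset := ⟨0, by simp [qf_zero]⟩
    have := hfW _ h0
    rw [hf] at this
    simpa using this
  have ha : 0 ≤ a := by
    by_contra hlt
    push_neg at hlt
    set t : ℝ := min ((u - b) / a) (-1) with htdef
    have ht0 : t < 0 := lt_of_le_of_lt (min_le_right _ _) (by norm_num)
    have h1 : a * t + b * 1 < u := by
      have := hfU (t, 1) ⟨ht0, one_pos⟩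
      rwa [hf] at this
    have h2 : u - b ≤ a * t := by
      have hle : t ≤ (u - b) / a := min_le_left _ _
      have := mul_le_mul_of_nonpos_left hle hlt.le
      calc u - b = a * ((u - b) / a) := by field_simp [hlt.ne]
        _ ≤ a * t := this
    linarith
  have hb : b ≤ 0 := by
    by_contra hlt
    push_neg at hlt
    set t : ℝ := max ((u + a) / b) 1 with htdef
    have ht0 : 0 < t := lt_of_lt_of_le one_pos (le_max_right _ _)
    have h1 : a * (-1) + b * t < u := by
      have := hfU (-1, t) ⟨by norm_num, ht0⟩
      rwa [hf] at this
    have h2 : u + a ≤ b * t := by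
      have hle : (u + a) / b ≤ t := le_max_left _ _
      have := mul_le_mul_of_nonneg_left hle hlt.le
      calc u + a = b * ((u + a) / b) := by field_simp [hlt.ne']
        _ ≤ b * t := this
    linarith
  have hW0 : ∀ x : m → ℂ, 0 ≤ a * (qf P x).re + b * (qf Q x).re := by
    intro x
    by_contra hneg
    push_neg at hneg
    set s : ℝ := a * (qf P x).re + b * (qf Q x).re with hs
    set τ : ℝ := (1 + |u|) / (-s) with hτ
    have hτpos : 0 < τ := div_pos (by positivity) (by linarith)
    have hmem : ((τ * (qf P x).re : ℝ), (τ * (qf Q x).re : ℝ)) ∈ Wset := by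
      refine ⟨((Real.sqrt τ : ℝ) : ℂ) • x, ?_⟩
      rw [qf_real_smul, qf_real_smul, Real.sq_sqrt hτpos.le]
    have := hfW _ hmem
    rw [hf] at this
    have hts : a * (τ * (qf P x).re) + b * (τ * (qf Q x).re) = τ * s := by rw [hs]; ring
    rw [hts] at this
    have hτs : τ * s = -(1 + |u|) := by
      have hsne : s ≠ 0 := hneg.ne
      rw [hτ, div_mul_eq_mul_div, mul_div_assoc, div_neg, div_self hsne]
      ring
    rw [hτs] at this
    have := neg_abs_le u
    linarith
  have hapos : 0 < a := by
    rcases eq_or_lt_of_le ha with ha0 | hpos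
    · exfalso
      have hbneg : b < 0 := by
        rcases eq_or_lt_of_le hb with hb0 | hneg
        · exfalso
          have h1 := hfU (-1, 1) ⟨by norm_num, one_pos⟩
          rw [hf, ← ha0, ← hb0] at h1
          simp at h1
          linarith
        · exact hneg
      have hQ0 : (qf Q x₀).re ≤ 0 := by
        have := hW0 x₀
        rw [← ha0] at this
        simp at this
        nlinarith
      linarith
    · exact hpos
  refine ⟨-b / a, div_nonneg (neg_nonneg.2 hb) hapos.le, fun x => ?_⟩
  have h1 := hW0 x
  have h2 : (qf P x).re - (-b / a) * (qf Q x).re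
      = (a * (qf P x).re + b * (qf Q x).re) / a := by
    field_simp
    ring
  rw [h2]
  exact div_nonneg h1 hapos.le

lemma star_sum_elim {α β : Type*} (v : α → ℂ) (w : β → ℂ) :
    star (Sum.elim v w) = Sum.elim (star v) (star w) := by
  funext i; cases i <;> rfl

lemma qf_conj_mul {k : Type*} [Fintype k] (A : Matrix k m ℂ) (M : Matrix k k ℂ) (x : m → ℂ) :
    qf (Aᴴ * M * A) x = qf M (A *ᵥ x) := by
  unfold qf
  rw [← mulVec_mulVec, ← mulVec_mulVec, dotProduct_mulVec, ← star_mulVec]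

lemma qf_add_smul (M : Matrix m m ℂ) (v g : m → ℂ) (c : ℂ) :
    qf M (v + c • g) = qf M v + c * (star v ⬝ᵥ M *ᵥ g)
      + (starRingEnd ℂ c) * (star g ⬝ᵥ M *ᵥ v) + (starRingEnd ℂ c) * c * qf M g := by
  simp only [qf, star_add, star_smul, mulVec_add, mulVec_smul, add_dotProduct,
    dotProduct_add, smul_dotProduct, dotProduct_smul, smul_eq_mul, Complex.star_def]
  ring

variable {N : ℕ}

lemma Ug_mulVec (ghat : Fin N → ℂ) (v : Fin N → ℂ) (w : Unit → ℂ) :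
    Ug ghat *ᵥ Sum.elim v w = v + w () • ghat := by
  rw [Ug, fromCols_mulVec_sumElim, one_mulVec]
  congr 1
  funext i
  simp [Matrix.replicateCol, mulVec, dotProduct, mul_comm]

lemma qf_fromBlocks (A : Matrix (Fin N) (Fin N) ℂ) (bc rc : Fin N → ℂ) (d : ℂ)
    (v : Fin N → ℂ) (w : Unit → ℂ) :
    star (Sum.elim v w) ⬝ᵥ (Matrix.fromBlocks A (Matrix.replicateCol Unit bc) (Matrix.replicateRow Unit rc)
        (Matrix.of fun _ _ => d)) *ᵥ (Sum.elim v w)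
      = star v ⬝ᵥ A *ᵥ v + w () * (star v ⬝ᵥ bc) + star (w ()) * (rc ⬝ᵥ v)
        + star (w ()) * (d * w ()) := by
  rw [star_sum_elim, fromBlocks_mulVec, sumElim_dotProduct_sumElim]
  simp only [Sum.elim_comp_inl, Sum.elim_comp_inr]
  have h1 : star v ⬝ᵥ (A *ᵥ v + Matrix.replicateCol Unit bc *ᵥ w)
      = star v ⬝ᵥ A *ᵥ v + w () * (star v ⬝ᵥ bc) := by
    rw [dotProduct_add]
    congr 1
    simp [Matrix.replicateCol, mulVec, dotProduct, Finset.mul_sum]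
    ring_nf
    exact Finset.sum_congr rfl fun i _ => by ring
  have h2 : star w ⬝ᵥ (Matrix.replicateRow Unit rc *ᵥ v + (Matrix.of fun _ _ => d) *ᵥ w)
      = star (w ()) * (rc ⬝ᵥ v) + star (w ()) * (d * w ()) := by
    rw [dotProduct_add]
    congr 1
    · simp [Matrix.replicateRow, mulVec, dotProduct]
    · simp [mulVec, dotProduct]
  rw [h1, h2]
  ring

lemma qf_SC10 (W V : Matrix (Fin N) (Fin N) ℂ) (ghat : Fin N → ℂ) (E φ ε η : ℝ)
    (v : Fin N → ℂ) (w : Unit → ℂ) :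
    qf (SC10 W V ghat E φ ε η) (Sum.elim v w)
      = qf (W + V) (v + w () • ghat) + (φ : ℂ) * (star v ⬝ᵥ v)
        + (-(φ * ε ^ 2) + E / η : ℂ) * (star (w ()) * w ()) := by
  have hblock := qf_fromBlocks ((φ : ℂ) • (1 : Matrix (Fin N) (Fin N) ℂ) + V)
    (V *ᵥ ghat) (star ghat ᵥ* V)
    ((-(φ * ε ^ 2) + E / η : ℂ) + star ghat ⬝ᵥ V *ᵥ ghat) v w
  have hW : qf ((Ug ghat)ᴴ * W * Ug ghat) (Sum.elim v w) = qf W (v + w () • ghat) := by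
    rw [qf_conj_mul, Ug_mulVec]
  have hsplit : qf (SC10 W V ghat E φ ε η) (Sum.elim v w)
      = star (Sum.elim v w) ⬝ᵥ (Matrix.fromBlocks
          ((φ : ℂ) • (1 : Matrix (Fin N) (Fin N) ℂ) + V)
          (Matrix.replicateCol Unit (V *ᵥ ghat)) (Matrix.replicateRow Unit (star ghat ᵥ* V))
          (Matrix.of fun _ _ => (-(φ * ε ^ 2) + E / η : ℂ) + star ghat ⬝ᵥ V *ᵥ ghat))
            *ᵥ (Sum.elim v w)
        + qf ((Ug ghat)ᴴ * W * Ug ghat) (Sum.elim v w) := by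
    rw [SC10]
    unfold qf
    rw [add_mulVec, dotProduct_add]
  have hA : star v ⬝ᵥ ((φ : ℂ) • (1 : Matrix (Fin N) (Fin N) ℂ) + V) *ᵥ v
      = (φ:ℂ) * (star v ⬝ᵥ v) + star v ⬝ᵥ V *ᵥ v := by
    rw [add_mulVec, dotProduct_add, smul_mulVec, one_mulVec, dotProduct_smul,
      smul_eq_mul]
  have hrc : (star ghat ᵥ* V) ⬝ᵥ v = star ghat ⬝ᵥ V *ᵥ v := (dotProduct_mulVec _ _ _).symm
  rw [hsplit, hblock, hA, hrc, hW]
  rw [qf_add_smul W v ghat (w ()), qf_add_smul (W + V) v ghat (w ())]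
  unfold qf
  simp only [add_mulVec, dotProduct_add, Complex.star_def]
  ring

/-- star-dot-self as a real number -/
lemma star_dot_self (v : m → ℂ) :
    star v ⬝ᵥ v = ((∑ i, Complex.normSq (v i) : ℝ) : ℂ) := by
  simp only [dotProduct, Pi.star_apply, Complex.star_def]
  push_cast
  refine Finset.sum_congr rfl fun i _ => ?_
  rw [← Complex.normSq_eq_conj_mul_self]

lemma star_dot_self_re_nonneg (v : m → ℂ) : 0 ≤ (star v ⬝ᵥ v).re := by
  rw [star_dot_self]
  simp only [Complex.ofReal_re]
  exact Finset.sum_nonneg fun i _ => Complex.normSq_nonneg _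

lemma star_dot_self_eq_zero (v : m → ℂ) (h : (star v ⬝ᵥ v).re = 0) : v = 0 := by
  rw [star_dot_self] at h
  simp only [Complex.ofReal_re] at h
  funext i
  have := (Finset.sum_eq_zero_iff_of_nonneg
    (fun j _ => Complex.normSq_nonneg (v j))).mp h i (Finset.mem_univ i)
  exact Complex.normSq_eq_zero.mp this

lemma SC10_isHermitian (W V : Matrix (Fin N) (Fin N) ℂ) (hW : W.IsHermitian)
    (hV : V.IsHermitian) (ghat : Fin N → ℂ) (E φ ε η : ℝ) :
    (SC10 W V ghat E φ ε η).IsHermitian := by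
  rw [SC10]
  refine Matrix.IsHermitian.add ?_ (isHermitian_conjTranspose_mul_mul _ hW)
  refine Matrix.IsHermitian.fromBlocks ?_ ?_ ?_
  · refine Matrix.IsHermitian.add ?_ hV
    rw [Matrix.IsHermitian, conjTranspose_smul, conjTranspose_one]
    congr 1
    simp [Complex.star_def, Complex.conj_ofReal]
  · rw [conjTranspose_replicateCol]
    congr 1
    rw [star_mulVec, hV.eq]
  · rw [Matrix.IsHermitian]
    ext i j
    simp only [conjTranspose_apply, Matrix.of_apply]
    rw [star_add]
    congr 1
    · simp only [Complex.star_def, map_add, map_neg, _root_.map_mul, map_div₀, map_pow,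
        Complex.conj_ofReal]
    · exact (herm_cross V hV ghat ghat).symm

variable {N : ℕ}

lemma qf_SC10_re (W V : Matrix (Fin N) (Fin N) ℂ) (ghat : Fin N → ℂ) (E φ ε η : ℝ)
    (v : Fin N → ℂ) (w : Unit → ℂ) :
    (qf (SC10 W V ghat E φ ε η) (Sum.elim v w)).re
      = (qf (W + V) (v + w () • ghat)).re + φ * (star v ⬝ᵥ v).re
        + (-(φ * ε ^ 2) + E / η) * Complex.normSq (w ()) := by
  rw [qf_SC10]
  have h1 : star (w ()) * w () = ((Complex.normSq (w ()) : ℝ) : ℂ) := by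
    rw [Complex.star_def, ← Complex.normSq_eq_conj_mul_self]
  rw [h1]
  have h2 : (-(↑φ * ↑ε ^ 2) + ↑E / ↑η : ℂ) = ((-(φ * ε ^ 2) + E / η : ℝ) : ℂ) := by
    push_cast; ring
  rw [h2, ← Complex.ofReal_mul]
  simp only [Complex.add_re, Complex.re_ofReal_mul, Complex.ofReal_re]

end SAux

open SAux

/-- S-procedure form of the robust harvested-power constraint: the robust constraint
`−η · gᴴ (W̄ + V̄) g ≤ E` for all `g = ĝ + Δg` with `‖Δg‖² ≤ ε²` holds iff there exists
`φ ≥ 0` making the associated LMI matrix positive semidefinite. -/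
theorem robust_harvested_power_lmi {N : ℕ} (hN : 1 ≤ N)
    (W V : Matrix (Fin N) (Fin N) ℂ) (hW : W.IsHermitian) (hV : V.IsHermitian)
    (ghat : Fin N → ℂ) (E : ℝ) (η ε : ℝ) (hη : 0 < η) (hε : 0 < ε) :
    (∀ Δg : Fin N → ℂ, (star Δg ⬝ᵥ Δg).re ≤ ε ^ 2 →
        -η * (star (ghat + Δg) ⬝ᵥ (W + V) *ᵥ (ghat + Δg)).re ≤ E) ↔
      ∃ φ : ℝ, 0 ≤ φ ∧ (SC10 W V ghat E φ ε η).PosSemidef := by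
  classical
  set Qm : Matrix (Fin N ⊕ Unit) (Fin N ⊕ Unit) ℂ :=
    Matrix.fromBlocks (-1) (Matrix.replicateCol Unit (0 : Fin N → ℂ))
      (Matrix.replicateRow Unit (0 : Fin N → ℂ))
      (Matrix.of fun _ _ => ((ε ^ 2 : ℝ) : ℂ)) with hQm
  have hQherm : Qm.IsHermitian := by
    refine Matrix.IsHermitian.fromBlocks ?_ ?_ ?_
    · rw [Matrix.IsHermitian, conjTranspose_neg, conjTranspose_one]
    · rw [conjTranspose_replicateCol, star_zero]
    · rw [Matrix.IsHermitian]
      ext i j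
      simp [Complex.star_def, Complex.conj_ofReal]
  have hdec : ∀ x : Fin N ⊕ Unit → ℂ, ∃ (v : Fin N → ℂ) (w : Unit → ℂ), x = Sum.elim v w :=
    fun x => ⟨x ∘ Sum.inl, x ∘ Sum.inr, by funext i; cases i <;> rfl⟩
  have hqQm : ∀ (v : Fin N → ℂ) (w : Unit → ℂ),
      (qf Qm (Sum.elim v w)).re = ε ^ 2 * Complex.normSq (w ()) - (star v ⬝ᵥ v).re := by
    intro v w
    have h := qf_fromBlocks (N := N) (-1) 0 0 ((ε ^ 2 : ℝ) : ℂ) v w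
    have h0 : qf Qm (Sum.elim v w)
        = star (Sum.elim v w) ⬝ᵥ (Matrix.fromBlocks (-1) (Matrix.replicateCol Unit (0 : Fin N → ℂ))
            (Matrix.replicateRow Unit (0 : Fin N → ℂ)) (Matrix.of fun _ _ => ((ε ^ 2 : ℝ) : ℂ)))
              *ᵥ (Sum.elim v w) := rfl
    rw [h0, h, neg_mulVec, one_mulVec, dotProduct_neg, dotProduct_zero, zero_dotProduct]
    have h1 : star (w ()) * w () = ((Complex.normSq (w ()) : ℝ) : ℂ) := by
      rw [Complex.star_def, ← Complex.normSq_eq_conj_mul_self]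
    have h2 : star (w ()) * (((ε ^ 2 : ℝ) : ℂ) * w ())
        = ((ε ^ 2 * Complex.normSq (w ()) : ℝ) : ℂ) := by
      rw [mul_left_comm, h1]
      push_cast
      ring
    rw [h2]
    simp [Complex.add_re, Complex.neg_re, ← Complex.ofReal_pow]
    ring
  constructor
  · -- robust constraint ⟹ LMI
    intro hyp
    have hstep1 : ∀ x, 0 ≤ (qf Qm x).re → 0 ≤ (qf (SC10 W V ghat E 0 ε η) x).re := by
      intro x hGx
      obtain ⟨v, w, rfl⟩ := hdec x
      rw [hqQm] at hGx
      rw [qf_SC10_re]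
      norm_num
      by_cases hw : w () = 0
      · have hS0 : (star v ⬝ᵥ v).re = 0 := by
          have := star_dot_self_re_nonneg v
          rw [hw] at hGx
          simp [Complex.normSq_zero] at hGx
          linarith
        have hv0 : v = 0 := star_dot_self_eq_zero v hS0
        rw [hv0, hw]
        simp [qf_zero, Complex.normSq_zero]
      · set t := w () with ht
        have hnt : 0 < Complex.normSq t := Complex.normSq_pos.mpr hw
        set Δg : Fin N → ℂ := t⁻¹ • v with hΔgdef
        have hΔdot : (star Δg ⬝ᵥ Δg).re
            = (Complex.normSq t)⁻¹ * (star v ⬝ᵥ v).re := by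
          have h3 : star Δg ⬝ᵥ Δg
              = ((Complex.normSq (t⁻¹) : ℝ) : ℂ) * (star v ⬝ᵥ v) := by
            rw [hΔgdef, star_smul, smul_dotProduct, dotProduct_smul, smul_eq_mul, smul_eq_mul,
              ← mul_assoc]
            congr 1
            rw [Complex.star_def]
            exact Complex.normSq_eq_conj_mul_self.symm
          rw [h3, Complex.re_ofReal_mul, map_inv₀]
        have hΔle : (star Δg ⬝ᵥ Δg).re ≤ ε ^ 2 := by
          rw [hΔdot, inv_mul_eq_div, div_le_iff₀ hnt]
          linarith
        have hr := hyp Δg hΔle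
        set r := (star (ghat + Δg) ⬝ᵥ (W + V) *ᵥ (ghat + Δg)).re with hrdef
        have hsc : v + t • ghat = t • (ghat + Δg) := by
          rw [smul_add, hΔgdef, smul_smul, mul_inv_cancel₀ hw, one_smul, add_comm]
        have hqv : (qf (W + V) (v + t • ghat)).re = Complex.normSq t * r := by
          rw [hsc, qf_smul]
          have h4 : (starRingEnd ℂ) t * t = ((Complex.normSq t : ℝ) : ℂ) := by
            rw [← Complex.normSq_eq_conj_mul_self]
          rw [h4, Complex.re_ofReal_mul]
          rfl
        rw [hqv]
        have h5 : 0 ≤ η * r + E := by linarith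
        have h6 : (η * r + E) / η = r + E / η := by field_simp
        have h7 : 0 ≤ r + E / η := by rw [← h6]; exact div_nonneg h5 hη.le
        nlinarith [mul_nonneg (Complex.normSq_nonneg t) h7]
    have hslater : 0 < (qf Qm (Sum.elim (0 : Fin N → ℂ) (fun _ => (1:ℂ)))).re := by
      rw [hqQm]
      simp [Complex.normSq_one]
      positivity
    obtain ⟨φ, hφ0, hφ⟩ := s_lemma (SC10 W V ghat E 0 ε η) Qm
      (SC10_isHermitian W V hW hV ghat E 0 ε η) hQherm _ hslater hstep1
    have hherm := SC10_isHermitian W V hW hV ghat E φ ε η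
    refine ⟨φ, hφ0, Matrix.posSemidef_iff_dotProduct_mulVec.mpr ⟨hherm, fun x => ?_⟩⟩
    have hre : 0 ≤ (qf (SC10 W V ghat E φ ε η) x).re := by
      obtain ⟨v, w, rfl⟩ := hdec x
      have h := hφ (Sum.elim v w)
      rw [qf_SC10_re, hqQm] at h
      rw [qf_SC10_re]
      nlinarith [h]
    have him : (qf (SC10 W V ghat E φ ε η) x).im = 0 := qf_im_zero _ hherm x
    have hz : qf (SC10 W V ghat E φ ε η) x
        = (((qf (SC10 W V ghat E φ ε η) x).re : ℝ) : ℂ) := by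
      apply Complex.ext
      · simp
      · simp [him]
    show 0 ≤ qf (SC10 W V ghat E φ ε η) x
    rw [hz]
    exact Complex.zero_le_real.mpr hre
  · -- LMI ⟹ robust constraint
    rintro ⟨φ, hφ0, hPSD⟩ Δg hΔg
    obtain ⟨hherm, hpos⟩ := Matrix.posSemidef_iff_dotProduct_mulVec.mp hPSD
    have h := hpos (Sum.elim Δg (fun _ => (1:ℂ)))
    have hre : 0 ≤ (qf (SC10 W V ghat E φ ε η) (Sum.elim Δg (fun _ => (1:ℂ)))).re := by
      have := (Complex.le_def.mp h).1
      simpa [qf] using this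
    rw [qf_SC10_re] at hre
    have h1 : Δg + (1:ℂ) • ghat = ghat + Δg := by rw [one_smul, add_comm]
    rw [h1] at hre
    simp only [Complex.normSq_one, mul_one] at hre
    have hqr : qf (W + V) (ghat + Δg) = star (ghat + Δg) ⬝ᵥ (W + V) *ᵥ (ghat + Δg) := rfl
    rw [hqr] at hre
    set r := (star (ghat + Δg) ⬝ᵥ (W + V) *ᵥ (ghat + Δg)).re with hrdef
    have hΔ2 : φ * (star Δg ⬝ᵥ Δg).re ≤ φ * ε ^ 2 := mul_le_mul_of_nonneg_left hΔg hφ0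
    have h4 : 0 ≤ r + E / η := by linarith
    have h5 := mul_nonneg hη.le h4
    have h6 : η * (r + E / η) = η * r + E := by field_simp
    rw [h6] at h5
    linarith
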